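/- Let K be a coloured (m+2)-clique with vertices w_0, …, w_{m+1}. Then there exists a permutation θ of {0,…,m+1} such that the (m+2)-cycle w_{θ(0)} → w_{θ(1)} → ⋯ → w_{θ(m+1)} → w_{θ(0)} has all its arrows coloured 0, i.e. c_{w_{θ(i)} w_{θ(i+1)}} = 0 for all i (indices modulo m+2). -/

import Mathlib

namespace MutClassAn

open Finset
open scoped Fin.NatCast Fin.IntCast Fin.CommRing

variable {V : Type} [Fintype V] [DecidableEq V]

/-- `M i j c` is the number of arrows from `i` to `j` of colour `c`.
An `m`-coloured quiver has no loops, is monochromatic and skew-symmetric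
(`c.rev = m - c` in `Fin (m+1)`). -/
def IsColouredQuiver {m : ℕ} (M : V → V → Fin (m + 1) → ℕ) : Prop :=
  (∀ i c, M i i c = 0) ∧
  (∀ i j c c', M i j c ≠ 0 → M i j c' ≠ 0 → c = c') ∧
  (∀ i j c, M i j c = M j i c.rev)

/-- A coloured quiver is simple if there is at most one arrow between any two
vertices in each direction. -/
def IsSimpleCQ {m : ℕ} (M : V → V → Fin (m + 1) → ℕ) : Prop :=
  ∀ i j : V, (∑ c, M i j c) ≤ 1

/-- Adjacency in the underlying graph. -/
def CQAdj {m : ℕ} (M : V → V → Fin (m + 1) → ℕ) (i j : V) : Prop :=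
  i ≠ j ∧ ∃ c, M i j c ≠ 0

/-- The colour of the (unique, for simple quivers) arrow from `i` to `j`. -/
def colourOf {m : ℕ} (M : V → V → Fin (m + 1) → ℕ) (i j : V) : ℕ :=
  ∑ c : Fin (m + 1), M i j c * c.val

/-- Buan–Thomas coloured quiver mutation at the vertex `j`. -/
def mutate {m : ℕ} (M : V → V → Fin (m + 1) → ℕ) (j : V) :
    V → V → Fin (m + 1) → ℕ := fun i k c =>
  if k = j then M i k (c + 1)
  else if i = j then M i k (c - 1)
  else ((M i k c : ℤ) - ∑ t ∈ Finset.univ.filter (fun t => t ≠ c), (M i k t : ℤ)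
      + ((M i j c : ℤ) - (M i j (c - 1) : ℤ)) * (M j k 0 : ℤ)
      + (M i j (Fin.last m) : ℤ) * ((M j k c : ℤ) - (M j k (c + 1) : ℤ))).toNat

/-- Mutation equivalence: the equivalence relation generated by single mutations. -/
def MutEquiv {m : ℕ} (M M' : V → V → Fin (m + 1) → ℕ) : Prop :=
  Relation.EqvGen (fun A B => ∃ v, mutate A v = B) M M'

/-- A hole is an induced cycle of length at least `4` in the underlying graph. -/
def HasHole {m : ℕ} (M : V → V → Fin (m + 1) → ℕ) : Prop :=
  ∃ k : ℕ, 4 ≤ k ∧ ∃ x : ZMod k → V, Function.Injective x ∧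
    (∀ i, CQAdj M (x i) (x (i + 1))) ∧
    ∀ i j : ZMod k, i ≠ j → j ≠ i + 1 → i ≠ j + 1 → ¬ CQAdj M (x i) (x j)

/-- A clique: a set of pairwise adjacent vertices. -/
def IsCliqueCQ {m : ℕ} (M : V → V → Fin (m + 1) → ℕ) (S : Set V) : Prop :=
  S.Pairwise (CQAdj M)

/-- The set of neighbours of a vertex. -/
def nbrs {m : ℕ} (M : V → V → Fin (m + 1) → ℕ) (v : V) : Set V :=
  {u | CQAdj M v u}

/-- Connectedness of the underlying graph. -/
def CQConnected {m : ℕ} (M : V → V → Fin (m + 1) → ℕ) : Prop :=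
  ∀ u w : V, Relation.ReflTransGen (CQAdj M) u w

/-- Condition (1) of the class `𝒬ₙᵐ`: the neighbourhood of every vertex is covered
by two cliques of sizes `r, k ≤ m + 2` with `r + k = z + 2`, with no arrows between
the two cliques away from the vertex. -/
def Cond1 {m : ℕ} (M : V → V → Fin (m + 1) → ℕ) : Prop :=
  ∀ v : V, (nbrs M v).Nonempty →
    ∃ R K : Finset V, v ∈ R ∧ v ∈ K ∧ IsCliqueCQ M ↑R ∧ IsCliqueCQ M ↑K ∧
      R.card + K.card = (nbrs M v).ncard + 2 ∧ R.card ≤ m + 2 ∧ K.card ≤ m + 2 ∧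
      (∀ u ∈ nbrs M v, u ∈ R ∨ u ∈ K) ∧
      ∀ a ∈ R, a ≠ v → ∀ b ∈ K, b ≠ v → ¬ CQAdj M a b

/-- Condition (2) of the class `𝒬ₙᵐ`: every triangle inside a clique has colour
sum `m - 1` along one of its two orientations (sums taken in `ℤ`). -/
def Cond2 {m : ℕ} (M : V → V → Fin (m + 1) → ℕ) : Prop :=
  ∀ v1 v2 v3 : V, v1 ≠ v2 → v2 ≠ v3 → v1 ≠ v3 →
    CQAdj M v1 v2 → CQAdj M v2 v3 → CQAdj M v1 v3 →
    ((colourOf M v2 v1 : ℤ) + (colourOf M v1 v3 : ℤ) + (colourOf M v3 v2 : ℤ)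
        = (m : ℤ) - 1 ∨
      ((m : ℤ) - colourOf M v2 v1) + ((m : ℤ) - colourOf M v1 v3)
          + ((m : ℤ) - colourOf M v3 v2) = (m : ℤ) - 1)

/-- Membership in the class `𝒬ₙᵐ` (`n` being the cardinality of the vertex set). -/
def MemQClass {m : ℕ} (M : V → V → Fin (m + 1) → ℕ) : Prop :=
  IsColouredQuiver M ∧ IsSimpleCQ M ∧ CQConnected M ∧ ¬ HasHole M ∧ Cond1 M ∧ Cond2 M

/-- An `Aₙ`-quiver: the underlying graph is the path graph on the vertex set. -/
def IsAnQuiver {m : ℕ} (M : V → V → Fin (m + 1) → ℕ) : Prop :=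
  ∃ e : Fin (Fintype.card V) ≃ V,
    ∀ i j : Fin (Fintype.card V),
      CQAdj M (e i) (e j) ↔ (i.val + 1 = j.val ∨ j.val + 1 = i.val)

/-- The coloured quiver on `Fin n` whose underlying graph is the path
`0 — 1 — ⋯ — (n-1)`, with the arrow `j+1 → j` coloured `c j` and the arrow
`j → j+1` coloured `m - c j`. -/
def pathQuiver (m n : ℕ) (c : ℕ → Fin (m + 1)) :
    Fin n → Fin n → Fin (m + 1) → ℕ := fun i j d =>
  if j.val + 1 = i.val ∧ d = c j.val then 1
  else if i.val + 1 = j.val ∧ d = (c i.val).rev then 1 else 0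

/-- Delete all arrows between vertices of `S`. -/
def deleteArrows {m : ℕ} (M : V → V → Fin (m + 1) → ℕ) (S : Finset V) :
    V → V → Fin (m + 1) → ℕ := fun i j c =>
  if i ∈ S ∧ j ∈ S then 0 else M i j c

/-- The connected component of `u` is an `A_k`-quiver (a path) for some `k ≥ 1`. -/
def ComponentIsPath {m : ℕ} (M : V → V → Fin (m + 1) → ℕ) (u : V) : Prop :=
  ∃ (k : ℕ) (x : Fin k → V), 1 ≤ k ∧ Function.Injective x ∧
    Set.range x = {w | Relation.ReflTransGen (CQAdj M) u w} ∧
    ∀ i j : Fin k, CQAdj M (x i) (x j) ↔ (i.val + 1 = j.val ∨ j.val + 1 = i.val)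

/-- An almost extremal clique: deleting its arrows leaves a connected component
which is an `A_k`-quiver for some `k ≥ 1`. -/
def AlmostExtremalClique {m : ℕ} (M : V → V → Fin (m + 1) → ℕ) (S : Finset V) : Prop :=
  IsCliqueCQ M ↑S ∧ ∃ u : V, ComponentIsPath (deleteArrows M S) u

/-- An extremal clique: deleting its arrows leaves a single-vertex component. -/
def ExtremalClique {m : ℕ} (M : V → V → Fin (m + 1) → ℕ) (S : Finset V) : Prop :=
  IsCliqueCQ M ↑S ∧
    ∃ u : V, {w | Relation.ReflTransGen (CQAdj (deleteArrows M S)) u w} = {u}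

/-- A coloured clique structure on a vertex type: colours `c i j ∈ {0,…,m}` with
skew-symmetry `c j i = m - c i j` and the triangle condition. -/
def IsCliqueColouring (m : ℕ) {W : Type} (c : W → W → ℕ) : Prop :=
  (∀ i j : W, i ≠ j → c i j ≤ m) ∧
  (∀ i j : W, i ≠ j → c i j + c j i = m) ∧
  ∀ i j l : W, i ≠ j → j ≠ l → i ≠ l →
    ((c i j : ℤ) + (c j l : ℤ) + (c l i : ℤ) = (m : ℤ) - 1 ∨
      (c i j : ℤ) + (c j l : ℤ) + (c l i : ℤ) = 2 * (m : ℤ) + 1)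

/-- Cyclic successor in `Fin k`. -/
def cyc {k : ℕ} (i : Fin k) : Fin k :=
  ⟨(i.val + 1) % k, Nat.mod_lt _ i.pos⟩

/-- The weight of the Hamiltonian cycle `x 0 → x 1 → ⋯ → x (k-1) → x 0`:
the sum of the colours of its arrows. -/
def cycleWeight {W : Type} (c : W → W → ℕ) {k : ℕ} (x : Fin k → W) : ℤ :=
  ∑ i : Fin k, (c (x i) (x (cyc i)) : ℤ)

/-- The Hamiltonian cycle on `k+1` vertices obtained from the cycle
`x 0 → ⋯ → x (k-1) → x 0` by inserting the vertex `x (Fin.last k)`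
immediately after `x j`. -/
def insertAfter {W : Type} {k : ℕ} (x : Fin (k + 1) → W) (j : Fin k) :
    Fin (k + 1) → W := fun i =>
  if i = 0 then x (Fin.last k)
  else x (Fin.castSucc ⟨(j.val + i.val) % k, Nat.mod_lt _ j.pos⟩)

/-- In a coloured `(m+2)`-clique with vertices `w 0, …, w (m+1)` there is a
permutation `θ` such that the `(m+2)`-cycle
`w (θ 0) → w (θ 1) → ⋯ → w (θ (m+1)) → w (θ 0)` has all its arrows coloured `0`. -/
theorem exists_zero_coloured_cycle (m : ℕ) (hm : 1 ≤ m)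
    (W : Type) [Fintype W] [DecidableEq W] (hcard : Fintype.card W = m + 2)
    (c : W → W → ℕ) (hc : IsCliqueColouring m c) (w : Fin (m + 2) ≃ W) :
    ∃ θ : Equiv.Perm (Fin (m + 2)),
      ∀ i : Fin (m + 2), c (w (θ i)) (w (θ (i + 1))) = 0 := by
  obtain ⟨hle, hskew, htri⟩ := hc
  set b : W := w 0 with hb
  -- the "potential" map into `Fin (m+2)`
  set φ : W → Fin (m + 2) := fun i => if i = b then 0 else (c b i : Fin (m + 2)) + 1
    with hφ
  have h2 : ((m : ℕ) : Fin (m + 2)) + 2 = 0 := by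
    have : (((m + 2 : ℕ)) : Fin (m + 2)) = 0 := by
      simp [Fin.natCast_self]
    push_cast at this
    linear_combination this
  have key : ∀ i j : W, i ≠ j →
      ((c i j : Fin (m + 2)) + 1 : Fin (m + 2)) = φ j - φ i := by
    intro i j hij
    by_cases hi : i = b
    · subst hi
      simp [hφ, hij.symm, if_neg]
    · by_cases hj : j = b
      · subst hj
        have h1 : ((c i b : Fin (m + 2)) : Fin (m + 2)) + (c b i : Fin (m + 2)) =
            ((m : ℕ) : Fin (m + 2)) := by
          have := hskew i b hij
          exact_mod_cast congrArg (Nat.cast : ℕ → Fin (m + 2)) this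
        simp only [hφ, if_pos rfl, if_neg hi]
        linear_combination h1 + h2
      · have hsk : ((c j b : Fin (m + 2))) + (c b j : Fin (m + 2)) =
            ((m : ℕ) : Fin (m + 2)) := by
          have := hskew j b hj
          exact_mod_cast congrArg (Nat.cast : ℕ → Fin (m + 2)) this
        simp only [hφ, if_neg hi, if_neg hj]
        rcases htri i j b hij hj hi with h | h
        · have hfin := congrArg (Int.cast : ℤ → Fin (m + 2)) h
          push_cast at hfin
          linear_combination hfin - hsk
        · have hfin := congrArg (Int.cast : ℤ → Fin (m + 2)) h
          push_cast at hfin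
          linear_combination hfin - hsk + h2
  have hinj : Function.Injective φ := by
    intro i j hijφ
    by_contra hij
    have := key i j hij
    rw [hijφ, sub_self] at this
    have h0 : ((c i j + 1 : ℕ) : Fin (m + 2)) = 0 := by push_cast; linear_combination this
    have hv := congrArg Fin.val h0
    rw [Fin.val_cast_of_lt (by have := hle i j hij; omega)] at hv
    simp at hv
  have hbij : Function.Bijective φ :=
    (Fintype.bijective_iff_injective_and_card φ).2 ⟨hinj, by simp [hcard]⟩
  let e : W ≃ Fin (m + 2) := Equiv.ofBijective φ hbij
  refine ⟨e.symm.trans w.symm, fun i => ?_⟩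
  have hwθ : ∀ j : Fin (m + 2), w ((e.symm.trans w.symm) j) = e.symm j := by
    intro j; simp
  rw [hwθ i, hwθ (i + 1)]
  have hne : e.symm i ≠ e.symm (i + 1) := by
    intro h
    have : i = i + 1 := by
      have := congrArg e h; simpa using this
    have h1 : (1 : Fin (m + 2)) = 0 := by
      exact left_eq_add.mp this
    simp at h1
  have hk := key (e.symm i) (e.symm (i + 1)) hne
  have hφe : ∀ j : Fin (m + 2), φ (e.symm j) = j := by
    intro j
    exact e.apply_symm_apply j
  rw [hφe, hφe] at hk
  have : ((c (e.symm i) (e.symm (i + 1)) : Fin (m + 2))) = 0 := by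
    linear_combination hk
  have hv := congrArg Fin.val this
  rw [Fin.val_cast_of_lt (by have := hle _ _ hne; omega)] at hv
  simpa using hv

end MutClassAn
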